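/- For real numbers L_1, …, L_k, let p_i = e^{L_i}/(e^{L_i}+1) and q_i = 1 − p_i, and let P_even = Σ over binary vectors (z_1,…,z_k) with even parity of ∏_i p_i^{1−z_i} q_i^{z_i}, P_odd the analogous odd-parity sum. Then log(P_even/P_odd) = 2·atanh(∏_{i=1}^k tanh(L_i/2)). (This is the exact binary check-node LLR update rule.) -/

import Mathlib

noncomputable def atanh (x : ℝ) : ℝ := Real.log ((1 + x) / (1 - x)) / 2

private def chi (z : ZMod 2) : ℝ := if z = 0 then 1 else -1

private lemma chi_add (a b : ZMod 2) : chi (a + b) = chi a * chi b := by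
  have h : ∀ c : ZMod 2, c = 0 ∨ c = 1 := by decide
  have h11 : (1 : ZMod 2) + 1 = 0 := by decide
  rcases h a with ha | ha <;> rcases h b with hb | hb <;>
    simp [chi, ha, hb, h11]

private lemma chi_sum {k : ℕ} (z : Fin k → ZMod 2) :
    chi (∑ i, z i) = ∏ i, chi (z i) := by
  classical
  induction (Finset.univ : Finset (Fin k)) using Finset.induction with
  | empty => simp [chi]
  | insert _ _ h ih => rw [Finset.sum_insert h, Finset.prod_insert h, chi_add, ih]

private lemma sum_zmod2 (g : ZMod 2 → ℝ) : ∑ z : ZMod 2, g z = g 0 + g 1 := by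
  have : (Finset.univ : Finset (ZMod 2)) = {0, 1} := by decide
  rw [this, Finset.sum_insert (by decide), Finset.sum_singleton]

private lemma key_swap {k : ℕ} (f : Fin k → ZMod 2 → ℝ) :
    ∑ x : Fin k → ZMod 2, ∏ i, f i (x i) = ∏ i, (f i 0 + f i 1) := by
  rw [← Fintype.piFinset_univ, ← Finset.prod_univ_sum]
  exact Finset.prod_congr rfl fun i _ => sum_zmod2 (f i)

private lemma tanh_eq (x : ℝ) :
    Real.tanh x = (Real.exp (2 * x) - 1) / (Real.exp (2 * x) + 1) := by
  have ha : Real.exp x ≠ 0 := Real.exp_ne_zero x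
  have h2 : Real.exp (2 * x) = Real.exp x * Real.exp x := by
    rw [two_mul, Real.exp_add]
  have hd : (0:ℝ) < Real.exp x * Real.exp x + 1 := by positivity
  rw [Real.tanh_eq_sinh_div_cosh, Real.sinh_eq, Real.cosh_eq, h2, Real.exp_neg]
  field_simp
  all_goals ring

/-- exact binary check-node LLR update.  With `p_i = e^{L_i}/(e^{L_i}+1)`,
`q_i = 1 − p_i`, `P_even`/`P_odd` the total probabilities of even/odd parity binary
vectors, `log(P_even/P_odd) = 2·atanh(∏ tanh(L_i/2))`. -/
theorem check_node_llr_update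
    (k : ℕ) (hk : 1 ≤ k) (L : Fin k → ℝ) :
    let p : Fin k → ℝ := fun i => Real.exp (L i) / (Real.exp (L i) + 1)
    let q : Fin k → ℝ := fun i => 1 - p i
    let Peven : ℝ := ∑ z : Fin k → ZMod 2,
      if (∑ i, z i) = (0 : ZMod 2) then ∏ i, (if z i = 0 then p i else q i) else 0
    let Podd : ℝ := ∑ z : Fin k → ZMod 2,
      if (∑ i, z i) = (1 : ZMod 2) then ∏ i, (if z i = 0 then p i else q i) else 0
    Real.log (Peven / Podd) = 2 * atanh (∏ i, Real.tanh (L i / 2)) := by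
  intro p q Peven Podd
  classical
  set T : ℝ := ∏ i, Real.tanh (L i / 2) with hT
  set w : Fin k → ZMod 2 → ℝ := fun i z => if z = 0 then p i else q i with hw
  have hpq : ∀ i, p i - q i = Real.tanh (L i / 2) := by
    intro i
    have he : (0:ℝ) < Real.exp (L i) + 1 := by positivity
    rw [tanh_eq]
    have h2 : 2 * (L i / 2) = L i := by ring
    rw [h2]
    simp only [p, q]
    field_simp
    all_goals ring
  have hpq1 : ∀ i, p i + q i = 1 := by intro i; simp [p, q]
  have h10 : (1 : ZMod 2) ≠ 0 := by decide
  have hA : (∑ z : Fin k → ZMod 2, ∏ i, w i (z i)) = ∏ i, (p i + q i) := by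
    rw [key_swap w]
    exact Finset.prod_congr rfl fun i _ => by simp [w, h10]
  have hB : (∑ z : Fin k → ZMod 2, chi (∑ i, z i) * ∏ i, w i (z i))
      = ∏ i, (p i - q i) := by
    have step : ∀ z : Fin k → ZMod 2,
        chi (∑ i, z i) * ∏ i, w i (z i) = ∏ i, chi (z i) * w i (z i) := by
      intro z; rw [chi_sum, Finset.prod_mul_distrib]
    simp only [step]
    have := key_swap (fun i z => chi z * w i z)
    rw [this]
    refine Finset.prod_congr rfl fun i _ => ?_
    simp [chi, w, h10]
    ring
  have hzm : ∀ c : ZMod 2, c = 0 ∨ c = 1 := by decide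
  have h01 : (0 : ZMod 2) ≠ 1 := by decide
  have hsum : Peven + Podd = 1 := by
    have h : Peven + Podd = ∑ z : Fin k → ZMod 2, ∏ i, w i (z i) := by
      rw [← Finset.sum_add_distrib]
      refine Finset.sum_congr rfl fun z _ => ?_
      rcases hzm (∑ i, z i) with h | h <;> simp [Peven, Podd, h, w, h01, h01.symm]
    rw [h, hA]
    simp [hpq1]
  have hdiff : Peven - Podd = T := by
    have h : Peven - Podd = ∑ z : Fin k → ZMod 2, chi (∑ i, z i) * ∏ i, w i (z i) := by
      rw [← Finset.sum_sub_distrib]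
      refine Finset.sum_congr rfl fun z _ => ?_
      rcases hzm (∑ i, z i) with h | h <;>
        simp [Peven, Podd, h, chi, w, h01, h01.symm]
    rw [h, hB, hT]
    exact Finset.prod_congr rfl fun i _ => hpq i
  have hPe : Peven = (1 + T) / 2 := by linarith
  have hPo : Podd = (1 - T) / 2 := by linarith
  have hdiv : Peven / Podd = (1 + T) / (1 - T) := by
    rw [hPe, hPo, div_div_div_comm]
    norm_num
  rw [hdiv, atanh]
  ring
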